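/- Let π : T^5 → T^5/Γ be the quotient map by the group Γ = ⟨α, β, γ⟩ ≅ (ℤ/2)³ of isometric involutions α(x) = (x₁, -x₂, -x₃, 1/2 - x₄, -x₅), β(x) = (-x₁, 1/2 - x₂, -x₃, x₄, -x₅), γ(x) = (-x₁, -x₂, 1/2 - x₃, -x₄, x₅). Then for any base point p₀ ∈ T^5 and any loop τ in T^5 based at p₀, the loop π ∘ τ in T^5/Γ is null-homotopic. -/

import Mathlib

abbrev T5 : Type := Fin 5 → AddCircle (1 : ℝ)

noncomputable def half : AddCircle (1 : ℝ) := ((1/2 : ℝ) : AddCircle (1 : ℝ))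

noncomputable def alphaMap (x : T5) : T5 := ![x 0, -x 1, -x 2, half - x 3, -x 4]
noncomputable def betaMap (x : T5) : T5 := ![-x 0, half - x 1, -x 2, x 3, -x 4]
noncomputable def gammaMap (x : T5) : T5 := ![-x 0, -x 1, half - x 2, -x 3, x 4]

/-- The orbit equivalence relation of `Γ = ⟨α, β, γ⟩` on `T⁵`: the equivalence
relation generated by `x ∼ α(x)`, `x ∼ β(x)`, `x ∼ γ(x)` (since `α, β, γ` are
commuting involutions this is exactly the orbit relation of `Γ`). -/
noncomputable def gammaSetoid : Setoid T5 :=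
  Relation.EqvGen.setoid (fun x y => y = alphaMap x ∨ y = betaMap x ∨ y = gammaMap x)

/-- The quotient `T⁵/Γ` with the quotient topology. -/
abbrev T5modGamma : Type := Quotient gammaSetoid

/-- The quotient map `π : T⁵ → T⁵/Γ`. -/
noncomputable def quotPi : T5 → T5modGamma := Quotient.mk gammaSetoid

theorem quotPi_continuous : Continuous quotPi := continuous_quotient_mk'

/-! ### Auxiliary material -/

noncomputable section StmtAux

open Set unitInterval

local notation "AC" => AddCircle (1 : ℝ)

namespace StmtAux

/-! #### Generalities on `AddCircle 1` -/

lemma coe_sub' (a b : ℝ) : ((a - b : ℝ) : AC) = (a : AC) - (b : AC) := AddCircle.coe_sub 1 a b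

lemma coe_add' (a b : ℝ) : ((a + b : ℝ) : AC) = (a : AC) + (b : AC) := AddCircle.coe_add 1 a b

lemma int_zero (n : ℤ) : ((n : ℝ) : AC) = 0 :=
  (QuotientAddGroup.eq_zero_iff _).mpr (AddSubgroup.intCast_mem_zmultiples_one _)

lemma continuous_coe_ac : Continuous ((↑) : ℝ → AC) := AddCircle.continuous_mk' 1

/-- The canonical representative `(‖u‖ : AddCircle 1)` is `u` or `-u`. -/
lemma norm_sign (u : AC) : ((‖u‖ : ℝ) : AC) = u ∨ ((‖u‖ : ℝ) : AC) = -u := by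
  induction u using QuotientAddGroup.induction_on with
  | H x =>
    have h : ‖(x : AC)‖ = |x - round x| := by rw [AddCircle.norm_eq]; norm_num
    have hz : ((round x : ℝ) : AC) = 0 := int_zero _
    rcases abs_choice (x - round x) with h1 | h1
    · left; rw [h, h1, coe_sub', hz, sub_zero]
    · right; rw [h, h1, AddCircle.coe_neg, coe_sub', hz, sub_zero]

/-! #### The master lemma: a loop admitting a free homotopy, through loops, to a
constant loop is null-homotopic rel its base point. -/

lemma master {X : Type*} [TopologicalSpace X] {x : X} (sg : Path x x)
    (H : ℝ × ℝ → X) (hH : Continuous H)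
    (h0 : ∀ t : I, H (0, (t : ℝ)) = sg t)
    (hloop : ∀ s : ℝ, H (s, 1) = H (s, 0))
    (hconst : ∀ b : ℝ, H (1, b) = H (1, 0)) :
    sg.Homotopic (Path.refl x) := by
  have hx00 : H (0, 0) = x := by simpa using h0 0
  have hx01 : H (0, 1) = x := by simpa using h0 1
  have hx0 : H 0 = x := hx00
  set A : ℝ → ℝ := fun t => min (2 * t) (min 1 (4 - 4 * t)) with hA
  set B : ℝ → ℝ := fun t => max 0 (min 1 (4 * t - 2)) with hB
  have contA : Continuous A := by fun_prop
  have contB : Continuous B := by fun_prop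
  have hA0 : A 0 = 0 := by norm_num [hA]
  have hA1 : A 1 = 0 := by norm_num [hA]
  have hB0 : B 0 = 0 := by norm_num [hB]
  have hB1 : B 1 = 1 := by norm_num [hB]
  have hAnn : ∀ t : I, 0 ≤ A (t : ℝ) := fun t => by
    have h1 := t.2.1; have h2 := t.2.2
    simp only [hA, le_min_iff]; norm_num; constructor <;> linarith
  have hAle : ∀ t : I, A (t : ℝ) ≤ 1 := fun t =>
    le_trans (min_le_right _ _) (min_le_left _ _)
  have hPB : ∀ t : I, H (A t, B t) = H (A t, 0) := by
    intro t
    rcases le_or_gt (t : ℝ) (1/2) with ht | ht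
    · have : B t = 0 := by
        have : min 1 (4 * (t:ℝ) - 2) ≤ 0 := le_trans (min_le_right _ _) (by linarith)
        simp [hB, max_eq_left this]
      rw [this]
    · rcases le_or_gt (t : ℝ) (3/4) with ht2 | ht2
      · have hat : A t = 1 := by
          have h1 : min 1 (4 - 4 * (t:ℝ)) = 1 := min_eq_left (by linarith)
          simp only [hA, h1]; exact min_eq_right (by linarith)
        rw [hat, hconst, hconst 0]
      · have hbt : B t = 1 := by
          have h1 : min 1 (4 * (t:ℝ) - 2) = 1 := min_eq_left (by linarith)
          simp [hB, h1]
        rw [hbt, hloop]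
  let P : Path x x :=
    { toFun := fun t => H (A t, 0)
      continuous_toFun := by fun_prop
      source' := by simp [hA0, hx00, hx0]
      target' := by simp [hA1, hx00, hx0] }
  have F₁ : sg.Homotopy P :=
    { toFun := fun q => H ((q.1 : ℝ) * A q.2, (1 - (q.1 : ℝ)) * (q.2 : ℝ) + (q.1 : ℝ) * B q.2)
      continuous_toFun := by fun_prop
      map_zero_left := by
        intro t
        simp only [Set.Icc.coe_zero, zero_mul, sub_zero, one_mul, add_zero]
        exact h0 t
      map_one_left := by
        intro t
        simp only [Set.Icc.coe_one, one_mul, sub_self, zero_mul, zero_add]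
        exact hPB t
      prop' := by
        rintro s t (rfl | h)
        · show H ((s:ℝ) * A ((0:I):ℝ), (1 - (s:ℝ)) * ((0:I):ℝ) + (s:ℝ) * B ((0:I):ℝ)) = sg 0
          simp only [Set.Icc.coe_zero, hA0, hB0, mul_zero, add_zero, zero_add]
          rw [hx00]
          exact sg.source.symm
        · simp only [Set.mem_singleton_iff] at h
          subst h
          show H ((s:ℝ) * A ((1:I):ℝ), (1 - (s:ℝ)) * ((1:I):ℝ) + (s:ℝ) * B ((1:I):ℝ)) = sg 1
          simp only [Set.Icc.coe_one, hA1, hB1, mul_zero, mul_one]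
          have h2 : (1 - (s:ℝ)) + (s:ℝ) = 1 := by ring
          rw [h2, hx01]
          exact sg.target.symm }
  have F₂ : P.Homotopy (Path.refl x) :=
    { toFun := fun q => H (min (A q.2) (1 - (q.1 : ℝ)), 0)
      continuous_toFun := by fun_prop
      map_zero_left := by
        intro t
        show H (min (A ((t:I):ℝ)) (1 - ((0:I):ℝ)), 0) = P t
        rw [Set.Icc.coe_zero, sub_zero, min_eq_left (hAle t)]
        rfl
      map_one_left := by
        intro t
        show H (min (A ((t:I):ℝ)) (1 - ((1:I):ℝ)), 0) = x
        rw [Set.Icc.coe_one, sub_self, min_eq_right (hAnn t), hx00]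
      prop' := by
        have h1s : ∀ s : I, (0:ℝ) ≤ 1 - (s:ℝ) := fun s => by have := s.2.2; linarith
        rintro s t (rfl | h)
        · show H (min (A ((0:I):ℝ)) (1 - (s:ℝ)), 0) = P 0
          rw [Set.Icc.coe_zero, hA0, min_eq_left (h1s s)]
          show H (0, 0) = H (A ((0:I):ℝ), 0)
          rw [Set.Icc.coe_zero, hA0]
        · simp only [Set.mem_singleton_iff] at h
          subst h
          show H (min (A ((1:I):ℝ)) (1 - (s:ℝ)), 0) = P 1
          rw [Set.Icc.coe_one, hA1, min_eq_left (h1s s)]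
          show H (0, 0) = H (A ((1:I):ℝ), 0)
          rw [Set.Icc.coe_one, hA1] }
  exact ⟨F₁.trans F₂⟩

/-! #### Pointwise sums of loops in a topological abelian group -/

def psum {G : Type*} [AddCommGroup G] [TopologicalSpace G] [IsTopologicalAddGroup G] {x : G}
    (a b : Path x x) : Path x x where
  toFun := fun t => a t + b t - x
  continuous_toFun := by fun_prop
  source' := by simp
  target' := by simp

lemma psum_congr {G : Type*} [AddCommGroup G] [TopologicalSpace G] [IsTopologicalAddGroup G]
    {x : G} {a a' b b' : Path x x} (ha : a.Homotopic a') (hb : b.Homotopic b') :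
    (psum a b).Homotopic (psum a' b') := by
  obtain ⟨F⟩ := ha
  obtain ⟨K⟩ := hb
  refine ⟨?_⟩
  exact
    { toFun := fun q => F q + K q - x
      continuous_toFun := by fun_prop
      map_zero_left := by intro t; simp [psum]
      map_one_left := by intro t; simp [psum]
      prop' := by
        rintro s t ht
        have hFt : F (s, t) = a t := F.eq_fst s ht
        have hKt : K (s, t) = b t := K.eq_fst s ht
        show F (s, t) + K (s, t) - x = psum a b t
        rw [hFt, hKt]
        rfl }

lemma psum_homotopic_trans {G : Type*} [AddCommGroup G] [TopologicalSpace G]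
    [IsTopologicalAddGroup G] {x : G} (a b : Path x x) :
    (psum a b).Homotopic (a.trans b) := by
  have key : psum (a.trans (Path.refl x)) ((Path.refl x).trans b) = a.trans b := by
    ext t
    show (a.trans (Path.refl x)) t + ((Path.refl x).trans b) t - x = (a.trans b) t
    rw [Path.trans_apply, Path.trans_apply, Path.trans_apply]
    split_ifs with h
    · simp
    · simp
  have h1 : a.Homotopic (a.trans (Path.refl x)) := ⟨(Path.Homotopy.transRefl a).symm⟩
  have h2 : b.Homotopic ((Path.refl x).trans b) := ⟨(Path.Homotopy.reflTrans b).symm⟩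
  rw [← key]
  exact psum_congr h1 h2

/-! #### Basic lemmas about the quotient map -/

lemma quotPi_alpha (x : T5) : quotPi (alphaMap x) = quotPi x := by
  refine (Quotient.sound ?_).symm
  exact Relation.EqvGen.rel x (alphaMap x) (Or.inl rfl)

lemma quotPi_beta (x : T5) : quotPi (betaMap x) = quotPi x := by
  refine (Quotient.sound ?_).symm
  exact Relation.EqvGen.rel x (betaMap x) (Or.inr (Or.inl rfl))

lemma quotPi_gamma (x : T5) : quotPi (gammaMap x) = quotPi x := by
  refine (Quotient.sound ?_).symm
  exact Relation.EqvGen.rel x (gammaMap x) (Or.inr (Or.inr rfl))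

/-! #### Coordinate loops -/

variable (p₀ : T5) (τ : Path p₀ p₀)

/-- The loop at `p₀` moving only in coordinate `i`, following `τ`'s `i`-th coordinate. -/
def sigmaLoop (i : Fin 5) : Path p₀ p₀ where
  toFun := fun t j => if j = i then τ t i else p₀ j
  continuous_toFun := by
    apply continuous_pi
    intro j
    by_cases h : j = i <;> simp [h] <;> fun_prop
  source' := by
    funext j
    by_cases h : j = i <;> simp [h]
  target' := by
    funext j
    by_cases h : j = i <;> simp [h]

/-- The loop at `p₀` following `τ` in coordinates `≥ k` and constant in coordinates `< k`. -/
def rhoLoop (k : ℕ) : Path p₀ p₀ where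
  toFun := fun t j => if k ≤ (j : ℕ) then τ t j else p₀ j
  continuous_toFun := by
    apply continuous_pi
    intro j
    by_cases h : k ≤ (j : ℕ) <;> simp [h] <;> fun_prop
  source' := by funext j; by_cases h : k ≤ (j : ℕ) <;> simp [h]
  target' := by funext j; by_cases h : k ≤ (j : ℕ) <;> simp [h]

lemma rho_zero : rhoLoop p₀ τ 0 = τ := by
  ext t j
  simp [rhoLoop]

lemma rho_four : rhoLoop p₀ τ 4 = sigmaLoop p₀ τ 4 := by
  ext t j
  show (if 4 ≤ (j:ℕ) then τ t j else p₀ j) = if j = 4 then τ t 4 else p₀ j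
  by_cases h : j = (4 : Fin 5)
  · subst h
    rw [if_pos (by decide : (4:ℕ) ≤ ((4:Fin 5):ℕ)), if_pos rfl]
  · have hv : (j : ℕ) ≠ 4 := fun hc => h (Fin.ext hc)
    have hj : (j : ℕ) < 4 := by have := j.2; omega
    rw [if_neg (by omega), if_neg h]

lemma rho_step (i : Fin 5) :
    rhoLoop p₀ τ (i : ℕ) = psum (sigmaLoop p₀ τ i) (rhoLoop p₀ τ ((i : ℕ) + 1)) := by
  ext t j
  show (if (i:ℕ) ≤ (j:ℕ) then τ t j else p₀ j)
      = (if j = i then τ t i else p₀ j) + (if (i:ℕ) + 1 ≤ (j:ℕ) then τ t j else p₀ j) - p₀ j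
  by_cases h : j = i
  · subst h
    rw [if_pos le_rfl, if_pos rfl, if_neg (by omega)]
    abel
  · have hv : (j:ℕ) ≠ (i:ℕ) := fun hc => h (Fin.ext hc)
    rw [if_neg h]
    by_cases h2 : (i:ℕ) ≤ (j:ℕ)
    · rw [if_pos h2, if_pos (by omega)]
      abel
    · rw [if_neg h2, if_neg (by omega)]
      abel

/-! #### Null-homotopy of each coordinate loop in the quotient -/

lemma coord_null (i : Fin 5) (w : Fin 5 → ℝ)
    (hpark : ∀ u : AC,
      quotPi (fun j => if j = i then u else p₀ j + ((w j : ℝ) : AC))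
        = quotPi (fun j => if j = i then -u else p₀ j + ((w j : ℝ) : AC))) :
    ((sigmaLoop p₀ τ i).map quotPi_continuous).Homotopic (Path.refl (quotPi p₀)) := by
  set c : ℝ → I := Set.projIcc (0:ℝ) 1 zero_le_one with hc
  have hcont_c : Continuous c := continuous_projIcc
  set v : ℝ → AC := fun t => τ (c t) i with hv
  have cv : Continuous v := (continuous_apply i).comp (τ.continuous.comp hcont_c)
  have hcv : ∀ t : I, v (t : ℝ) = τ t i := by
    intro t
    simp only [hv, hc, Set.projIcc_val]
  have hv0 : v 0 = p₀ i := by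
    have := hcv 0
    rw [show ((0:I):ℝ) = (0:ℝ) from rfl] at this
    rw [this, τ.source]
  have hv1 : v 1 = p₀ i := by
    have := hcv 1
    rw [show ((1:I):ℝ) = (1:ℝ) from rfl] at this
    rw [this, τ.target]
  set F : AC → T5 := fun u j => if j = i then u else p₀ j + ((w j : ℝ) : AC) with hF
  have cF : Continuous F := by
    apply continuous_pi
    intro j
    by_cases h : j = i
    · subst h
      simpa [hF] using continuous_id'
    · simp only [hF, h, if_false]
      exact continuous_const
  have hFnorm : ∀ u : AC, quotPi (F (((‖u‖ : ℝ) : AC))) = quotPi (F u) := by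
    intro u
    rcases norm_sign u with h | h
    · rw [h]
    · rw [h, ← hpark u]
  set H : ℝ × ℝ → T5modGamma := fun q =>
    if q.1 ≤ 1/2 then
      quotPi (fun j => if j = i then v q.2 else p₀ j + (((2 * q.1) * w j : ℝ) : AC))
    else quotPi (F ((((2 - 2 * q.1) * ‖v q.2‖ + (2 * q.1 - 1) * ‖v 0‖ : ℝ)) : AC)) with hH
  have hHcont : Continuous H := by
    apply Continuous.if_le
    · apply quotPi_continuous.comp
      apply continuous_pi
      intro j
      by_cases h : j = i
      · simp only [h, ↓reduceIte]
        exact cv.comp continuous_snd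
      · simp only [h, if_false]
        exact continuous_const.add
          ((continuous_coe_ac.comp ((continuous_const.mul continuous_fst).mul continuous_const)))
    · apply quotPi_continuous.comp
      apply cF.comp
      apply continuous_coe_ac.comp
      fun_prop
    · exact continuous_fst
    · exact continuous_const
    · rintro ⟨s, t⟩ (hs : s = 1/2)
      subst hs
      show quotPi (fun j => if j = i then v t else p₀ j + (((2 * (1/2:ℝ)) * w j : ℝ) : AC))
          = quotPi (F ((((2 - 2 * (1/2:ℝ)) * ‖v t‖ + (2 * (1/2:ℝ) - 1) * ‖v 0‖ : ℝ)) : AC))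
      have hL : (fun j => if j = i then v t else p₀ j + (((2 * (1/2:ℝ)) * w j : ℝ) : AC))
          = F (v t) := by
        funext j
        by_cases h : j = i
        · simp [hF, h]
        · simp only [hF, h, if_false]
          norm_num
      rw [hL]
      have hR : ((2 - 2 * (1/2:ℝ)) * ‖v t‖ + (2 * (1/2:ℝ) - 1) * ‖v 0‖ : ℝ) = ‖v t‖ := by
        norm_num
      rw [hR, hFnorm (v t)]
  have h0 : ∀ t : I, H (0, (t : ℝ)) = ((sigmaLoop p₀ τ i).map quotPi_continuous) t := by
    intro t
    have : ((sigmaLoop p₀ τ i).map quotPi_continuous) t = quotPi (sigmaLoop p₀ τ i t) := rfl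
    rw [this]
    show (if (0:ℝ) ≤ 1/2 then _ else _) = _
    rw [if_pos (by norm_num : (0:ℝ) ≤ 1/2)]
    have : (fun j => if j = i then v (t:ℝ) else p₀ j + (((2 * (0:ℝ)) * w j : ℝ) : AC))
        = sigmaLoop p₀ τ i t := by
      funext j
      by_cases h : j = i
      · simp [h, hcv t, sigmaLoop]
      · simp only [h, if_false]
        show p₀ j + (((2 * (0:ℝ)) * w j : ℝ) : AC) = sigmaLoop p₀ τ i t j
        have : ((2 * (0:ℝ)) * w j : ℝ) = 0 := by ring
        rw [this]
        show p₀ j + ((0:ℝ) : AC) = sigmaLoop p₀ τ i t j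
        rw [show ((0:ℝ) : AC) = 0 from rfl, add_zero]
        simp [sigmaLoop, h]
    rw [this]
  have hloop : ∀ s : ℝ, H (s, 1) = H (s, 0) := by
    intro s
    have hvv : v 1 = v 0 := by rw [hv0, hv1]
    show (if s ≤ 1/2 then _ else _) = (if s ≤ 1/2 then _ else _)
    split_ifs with h
    · simp only [hvv]
    · simp only [hvv]
  have hconst : ∀ b : ℝ, H (1, b) = H (1, 0) := by
    intro b
    show (if (1:ℝ) ≤ 1/2 then _ else _) = (if (1:ℝ) ≤ 1/2 then _ else _)
    rw [if_neg (by norm_num : ¬ (1:ℝ) ≤ 1/2), if_neg (by norm_num : ¬ (1:ℝ) ≤ 1/2)]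
    have e2 : (2 - 2 * (1:ℝ)) = 0 := by norm_num
    have e3 : (2 * (1:ℝ) - 1) = 1 := by norm_num
    simp only [e2, e3, zero_mul, one_mul, zero_add]
  exact master _ H hHcont h0 hloop hconst

end StmtAux

end StmtAux

/-- For any base point `p₀ ∈ T⁵` and any loop `τ` in `T⁵` based at `p₀`, the loop
`π ∘ τ` in `T⁵/Γ` is null-homotopic (homotopic rel basepoint to the constant loop). -/
theorem stmt8 (p₀ : T5) (τ : Path p₀ p₀) :
    (τ.map quotPi_continuous).Homotopic (Path.refl (quotPi p₀)) := by
  classical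
  set r : Fin 5 → ℝ := fun j => (p₀ j).out with hrdef
  have hr : ∀ j : Fin 5, ((r j : ℝ) : AddCircle (1:ℝ)) = p₀ j := fun j => Quotient.out_eq _
  have cancel : ∀ j : Fin 5, p₀ j + ((-(r j) : ℝ) : AddCircle (1:ℝ)) = 0 := fun j => by
    rw [AddCircle.coe_neg, hr j, add_neg_cancel]
  have quarter : ∀ j : Fin 5,
      p₀ j + (((1/4 - r j : ℝ)) : AddCircle (1:ℝ)) = ((1/4 : ℝ) : AddCircle (1:ℝ)) := fun j => by
    conv_lhs => rw [← hr j]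
    rw [← StmtAux.coe_add']
    norm_num
  have zero_w : ∀ j : Fin 5, p₀ j + (((0:ℝ)) : AddCircle (1:ℝ)) = p₀ j := fun j => by
    rw [show ((0:ℝ) : AddCircle (1:ℝ)) = 0 from rfl, add_zero]
  have halfq : half - ((4⁻¹:ℝ) : AddCircle (1:ℝ)) = ((4⁻¹:ℝ) : AddCircle (1:ℝ)) := by
    show ((1/2:ℝ) : AddCircle (1:ℝ)) - _ = _
    rw [← StmtAux.coe_sub']
    norm_num
  have key1 : ∀ j : Fin 5, p₀ j + (((4⁻¹:ℝ) : AddCircle (1:ℝ)) - ((r j : ℝ) : AddCircle (1:ℝ)))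
      = ((4⁻¹:ℝ) : AddCircle (1:ℝ)) := fun j => by
    rw [← hr j]; abel
  have key2 : ∀ j : Fin 5, p₀ j + -((r j : ℝ) : AddCircle (1:ℝ))
      = ((r j : ℝ) : AddCircle (1:ℝ)) + -(p₀ j) := fun j => by
    rw [← hr j]
  -- coordinate 0, via β
  have h0 : ((StmtAux.sigmaLoop p₀ τ 0).map quotPi_continuous).Homotopic
      (Path.refl (quotPi p₀)) := by
    apply StmtAux.coord_null p₀ τ 0 ![0, 1/4 - r 1, -(r 2), 0, -(r 4)]
    intro u
    have hBX : (fun j : Fin 5 => if j = 0 then -u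
          else p₀ j + ((![0, 1/4 - r 1, -(r 2), 0, -(r 4)] j : ℝ) : AddCircle (1:ℝ)))
        = betaMap (fun j : Fin 5 => if j = 0 then u
          else p₀ j + ((![0, 1/4 - r 1, -(r 2), 0, -(r 4)] j : ℝ) : AddCircle (1:ℝ))) := by
      funext j
      fin_cases j <;> simp [betaMap]
      · rw [key1 1, halfq]
      · rw [key2 2]
      · rw [key2 4]
    rw [hBX, StmtAux.quotPi_beta]
  -- coordinate 1, via α
  have h1 : ((StmtAux.sigmaLoop p₀ τ 1).map quotPi_continuous).Homotopic
      (Path.refl (quotPi p₀)) := by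
    apply StmtAux.coord_null p₀ τ 1 ![0, 0, -(r 2), 1/4 - r 3, -(r 4)]
    intro u
    have hAX : (fun j : Fin 5 => if j = 1 then -u
          else p₀ j + ((![0, 0, -(r 2), 1/4 - r 3, -(r 4)] j : ℝ) : AddCircle (1:ℝ)))
        = alphaMap (fun j : Fin 5 => if j = 1 then u
          else p₀ j + ((![0, 0, -(r 2), 1/4 - r 3, -(r 4)] j : ℝ) : AddCircle (1:ℝ))) := by
      funext j
      fin_cases j <;> simp [alphaMap]
      · rw [key2 2]
      · rw [key1 3, halfq]
      · rw [key2 4]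
    rw [hAX, StmtAux.quotPi_alpha]
  -- coordinate 2, via α
  have h2 : ((StmtAux.sigmaLoop p₀ τ 2).map quotPi_continuous).Homotopic
      (Path.refl (quotPi p₀)) := by
    apply StmtAux.coord_null p₀ τ 2 ![0, -(r 1), 0, 1/4 - r 3, -(r 4)]
    intro u
    have hAX : (fun j : Fin 5 => if j = 2 then -u
          else p₀ j + ((![0, -(r 1), 0, 1/4 - r 3, -(r 4)] j : ℝ) : AddCircle (1:ℝ)))
        = alphaMap (fun j : Fin 5 => if j = 2 then u
          else p₀ j + ((![0, -(r 1), 0, 1/4 - r 3, -(r 4)] j : ℝ) : AddCircle (1:ℝ))) := by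
      funext j
      fin_cases j <;> simp [alphaMap]
      · rw [key2 1]
      · rw [key1 3, halfq]
      · rw [key2 4]
    rw [hAX, StmtAux.quotPi_alpha]
  -- coordinate 3, via γ
  have h3 : ((StmtAux.sigmaLoop p₀ τ 3).map quotPi_continuous).Homotopic
      (Path.refl (quotPi p₀)) := by
    apply StmtAux.coord_null p₀ τ 3 ![-(r 0), -(r 1), 1/4 - r 2, 0, 0]
    intro u
    have hGX : (fun j : Fin 5 => if j = 3 then -u
          else p₀ j + ((![-(r 0), -(r 1), 1/4 - r 2, 0, 0] j : ℝ) : AddCircle (1:ℝ)))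
        = gammaMap (fun j : Fin 5 => if j = 3 then u
          else p₀ j + ((![-(r 0), -(r 1), 1/4 - r 2, 0, 0] j : ℝ) : AddCircle (1:ℝ))) := by
      funext j
      fin_cases j <;> simp [gammaMap]
      · rw [key2 0]
      · rw [key2 1]
      · rw [key1 2, halfq]
    rw [hGX, StmtAux.quotPi_gamma]
  -- coordinate 4, via α
  have h4 : ((StmtAux.sigmaLoop p₀ τ 4).map quotPi_continuous).Homotopic
      (Path.refl (quotPi p₀)) := by
    apply StmtAux.coord_null p₀ τ 4 ![0, -(r 1), -(r 2), 1/4 - r 3, 0]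
    intro u
    have hAX : (fun j : Fin 5 => if j = 4 then -u
          else p₀ j + ((![0, -(r 1), -(r 2), 1/4 - r 3, 0] j : ℝ) : AddCircle (1:ℝ)))
        = alphaMap (fun j : Fin 5 => if j = 4 then u
          else p₀ j + ((![0, -(r 1), -(r 2), 1/4 - r 3, 0] j : ℝ) : AddCircle (1:ℝ))) := by
      funext j
      fin_cases j <;> simp [alphaMap]
      · rw [key2 1]
      · rw [key2 2]
      · rw [key1 3, halfq]
    rw [hAX, StmtAux.quotPi_alpha]
  -- assemble
  have step : ∀ a b : Path p₀ p₀,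
      (a.map quotPi_continuous).Homotopic (Path.refl (quotPi p₀)) →
      (b.map quotPi_continuous).Homotopic (Path.refl (quotPi p₀)) →
      ((StmtAux.psum a b).map quotPi_continuous).Homotopic (Path.refl (quotPi p₀)) := by
    intro a b ha hb
    have hmt := Path.Homotopic.map (StmtAux.psum_homotopic_trans a b)
      (f := ⟨quotPi, quotPi_continuous⟩)
    rw [Path.map_trans] at hmt
    have h3' := Path.Homotopic.hcomp ha hb
    rw [Path.refl_trans_refl] at h3'
    exact hmt.trans h3'
  have R4 : ((StmtAux.rhoLoop p₀ τ 4).map quotPi_continuous).Homotopic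
      (Path.refl (quotPi p₀)) := by
    rw [StmtAux.rho_four]; exact h4
  have R3 : ((StmtAux.rhoLoop p₀ τ 3).map quotPi_continuous).Homotopic
      (Path.refl (quotPi p₀)) := by
    have e := StmtAux.rho_step p₀ τ (3 : Fin 5)
    rw [show (((3 : Fin 5) : ℕ)) = 3 from rfl] at e
    rw [e]
    exact step _ _ h3 R4
  have R2 : ((StmtAux.rhoLoop p₀ τ 2).map quotPi_continuous).Homotopic
      (Path.refl (quotPi p₀)) := by
    have e := StmtAux.rho_step p₀ τ (2 : Fin 5)
    rw [show (((2 : Fin 5) : ℕ)) = 2 from rfl] at e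
    rw [e]
    exact step _ _ h2 R3
  have R1 : ((StmtAux.rhoLoop p₀ τ 1).map quotPi_continuous).Homotopic
      (Path.refl (quotPi p₀)) := by
    have e := StmtAux.rho_step p₀ τ (1 : Fin 5)
    rw [show (((1 : Fin 5) : ℕ)) = 1 from rfl] at e
    rw [e]
    exact step _ _ h1 R2
  have R0 : ((StmtAux.rhoLoop p₀ τ 0).map quotPi_continuous).Homotopic
      (Path.refl (quotPi p₀)) := by
    have e := StmtAux.rho_step p₀ τ (0 : Fin 5)
    rw [show (((0 : Fin 5) : ℕ)) = 0 from rfl] at e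
    rw [e]
    exact step _ _ h0 R1
  rw [← StmtAux.rho_zero p₀ τ]
  exact R0
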